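/- Let K be a number field with ring of integers O_K, n a positive integer, and T ∈ M_n(O_K) an invertible matrix (over the fraction field) such that T is an s-th power in M_n(O_K) for all but finitely many positive integers s. Then T is the identity matrix. -/

import Mathlib

set_option maxHeartbeats 1000000
set_option synthInstance.maxHeartbeats 400000

open NumberField

/-- Any nonzero algebraic integer divides a nonzero rational integer. -/
lemma aux_dvd_int (K : Type*) [Field K] [NumberField K] (y : 𝓞 K) (hy : y ≠ 0) :
    ∃ c : ℤ, c ≠ 0 ∧ y ∣ (algebraMap ℤ (𝓞 K) c) := by
  have hint : IsIntegral ℤ y := IsIntegralClosure.isIntegral ℤ K y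
  set f := minpoly ℤ y with hf
  have haev : Polynomial.aeval y f = 0 := minpoly.aeval ℤ y
  refine ⟨f.coeff 0, ?_, ?_⟩
  · intro hc0
    have hXdvd : Polynomial.X * f.divX = f := by
      have := Polynomial.X_mul_divX_add f
      rw [hc0] at this
      simpa using this
    have hirr : Irreducible f := minpoly.irreducible hint
    rcases hirr.isUnit_or_isUnit hXdvd.symm with hu | hu
    · exact Polynomial.not_isUnit_X hu
    · have h0 : Polynomial.aeval y (Polynomial.X * f.divX) = 0 := by rw [hXdvd]; exact haev
      rw [map_mul, Polynomial.aeval_X] at h0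
      have hunit : IsUnit (Polynomial.aeval y f.divX) := hu.map (Polynomial.aeval y)
      exact hy ((hunit.mul_left_eq_zero).mp h0)
  · refine ⟨-(Polynomial.aeval y f.divX), ?_⟩
    have hXd := Polynomial.X_mul_divX_add f
    have h2 : Polynomial.aeval y (Polynomial.X * f.divX + Polynomial.C (f.coeff 0)) = 0 := by
      rw [hXd]; exact haev
    rw [map_add, map_mul, Polynomial.aeval_X, Polynomial.aeval_C] at h2
    have h3 : algebraMap ℤ (𝓞 K) (f.coeff 0) = -(y * Polynomial.aeval y f.divX) := by
      linear_combination h2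
    rw [h3]; ring

/-- There is a maximal ideal of `𝓞 K`, nonzero, avoiding any nonzero `y`. -/
lemma aux_exists_maximal (K : Type*) [Field K] [NumberField K] (y : 𝓞 K) (hy : y ≠ 0) :
    ∃ P : Ideal (𝓞 K), P.IsMaximal ∧ P ≠ ⊥ ∧ y ∉ P := by
  obtain ⟨c, hc0, hdvd⟩ := aux_dvd_int K y hy
  obtain ⟨p, hpc, hp⟩ := Nat.exists_infinite_primes (c.natAbs + 1)
  set q : 𝓞 K := ((p : ℤ) : 𝓞 K) with hqdef
  -- p does not divide c
  have hpdvd : ¬ ((p : ℤ) ∣ c) := by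
    intro hd
    have h1 : (p : ℤ) ∣ |c| := (dvd_abs _ _).mpr hd
    have h2 : (p : ℤ) ≤ |c| := Int.le_of_dvd (abs_pos.mpr hc0) h1
    rw [Int.abs_eq_natAbs] at h2
    omega
  -- q is not a unit
  have hpu : ¬ IsUnit q := by
    intro hu
    have h1 : |(RingOfIntegers.norm ℚ q : ℚ)| = 1 := NumberField.isUnit_iff_norm.mp hu
    have h2 : (RingOfIntegers.norm ℚ q : ℚ) = Algebra.norm ℚ ((q : K)) :=
      RingOfIntegers.coe_norm ℚ q
    have h3 : ((q : K)) = algebraMap ℚ K ((p : ℚ)) := by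
      simp [hqdef]
    rw [h2, h3, Algebra.norm_algebraMap] at h1
    have hd : 0 < Module.finrank ℚ K := Module.finrank_pos
    have hge : ((p : ℚ)) ^ Module.finrank ℚ K ≥ 2 := by
      calc ((p : ℚ)) ^ Module.finrank ℚ K ≥ 2 ^ Module.finrank ℚ K := by
            apply pow_le_pow_left₀ (by norm_num)
            exact_mod_cast hp.two_le
        _ ≥ 2 ^ 1 := by
            apply pow_le_pow_right₀ (by norm_num) hd
        _ = 2 := by norm_num
    rw [abs_of_nonneg (by positivity)] at h1
    linarith
  -- take a maximal ideal containing q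
  have hne : Ideal.span {q} ≠ ⊤ := by
    rw [Ne, Ideal.span_singleton_eq_top]; exact hpu
  obtain ⟨P, hPmax, hPle⟩ := Ideal.exists_le_maximal _ hne
  have hpP : q ∈ P := hPle (Ideal.subset_span rfl)
  have hPbot : P ≠ ⊥ := by
    intro hb
    rw [hb, Ideal.mem_bot] at hpP
    have h4 : ((p : ℤ) : 𝓞 K) = 0 := hpP
    rw [Int.cast_eq_zero] at h4
    have := hp.pos
    omega
  refine ⟨P, hPmax, hPbot, fun hyP => ?_⟩
  have hcP : algebraMap ℤ (𝓞 K) c ∈ P := P.mem_of_dvd hdvd hyP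
  have hpnat : Nat.Coprime p c.natAbs := by
    refine (Nat.Prime.coprime_iff_not_dvd hp).mpr (fun hd => hpdvd ?_)
    exact Int.dvd_natAbs.mp (Int.natCast_dvd_natCast.mpr hd)
  have hcop : IsCoprime (p : ℤ) c := by
    rw [Int.isCoprime_iff_gcd_eq_one]
    simpa [Int.gcd] using hpnat
  obtain ⟨a, b, hab⟩ := hcop
  have h1P : (1 : 𝓞 K) ∈ P := by
    have h5 := congrArg (algebraMap ℤ (𝓞 K)) hab
    rw [map_add, map_mul, map_mul, map_one] at h5
    rw [← h5]
    have hqP : algebraMap ℤ (𝓞 K) (p : ℤ) ∈ P := by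
      have : algebraMap ℤ (𝓞 K) (p : ℤ) = q := by simp [hqdef]
      rw [this]; exact hpP
    exact P.add_mem (P.mul_mem_left _ hqP) (P.mul_mem_left _ hcP)
  exact hPmax.ne_top ((Ideal.eq_top_iff_one P).mpr h1P)

theorem stmt_11 (K : Type*) [Field K] [NumberField K] (n : ℕ)
    (T : Matrix (Fin n) (Fin n) (𝓞 K)) (hT : T.det ≠ 0)
    (h : {s : ℕ | 0 < s ∧ ¬∃ S : Matrix (Fin n) (Fin n) (𝓞 K), S ^ s = T}.Finite) :
    T = 1 := by
  classical
  by_contra hne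
  have hex : ∃ i j, T i j ≠ (1 : Matrix (Fin n) (Fin n) (𝓞 K)) i j := by
    by_contra h'
    push_neg at h'
    exact hne (Matrix.ext h')
  obtain ⟨i, j, hij⟩ := hex
  set x : 𝓞 K := T i j - (1 : Matrix (Fin n) (Fin n) (𝓞 K)) i j with hxdef
  have hx0 : x ≠ 0 := sub_ne_zero.mpr hij
  set y : 𝓞 K := T.det * x with hydef
  have hy0 : y ≠ 0 := mul_ne_zero hT hx0
  obtain ⟨P, hPmax, hPbot, hyP⟩ := aux_exists_maximal K y hy0
  letI : Fintype ((𝓞 K) ⧸ P) := (haveI := Ideal.finiteQuotientOfFreeOfNeBot P hPbot; Fintype.ofFinite _)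
  haveI : Finite (Matrix (Fin n) (Fin n) ((𝓞 K) ⧸ P))ˣ := inferInstance
  haveI : Nonempty (Matrix (Fin n) (Fin n) ((𝓞 K) ⧸ P))ˣ := ⟨1⟩
  set φ : Matrix (Fin n) (Fin n) (𝓞 K) →+* Matrix (Fin n) (Fin n) ((𝓞 K) ⧸ P) :=
    (Ideal.Quotient.mk P).mapMatrix with hφdef
  set M := Nat.card (Matrix (Fin n) (Fin n) ((𝓞 K) ⧸ P))ˣ with hMdef
  have hM0 : 0 < M := Nat.card_pos
  obtain ⟨B, hB⟩ := h.bddAbove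
  set s := M * (B + 1) with hsdef
  have hs0 : 0 < s := by positivity
  have hsgood : ∃ S : Matrix (Fin n) (Fin n) (𝓞 K), S ^ s = T := by
    by_contra hns
    have hmem : s ∈ {s : ℕ | 0 < s ∧ ¬∃ S : Matrix (Fin n) (Fin n) (𝓞 K), S ^ s = T} := ⟨hs0, hns⟩
    have hle : s ≤ B := hB hmem
    have hge : B + 1 ≤ s := le_mul_of_one_le_left (by omega) hM0
    omega
  obtain ⟨S, hS⟩ := hsgood
  -- reduce mod P
  have hdetTP : T.det ∉ P := fun hd => hyP (hydef ▸ Ideal.mul_mem_right _ _ hd)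
  have hdetT' : IsUnit (φ T).det := by
    have hmk : (φ T).det = Ideal.Quotient.mk P T.det := by
      rw [hφdef]; exact (RingHom.map_det _ _).symm
    rw [hmk]
    obtain ⟨b, hb⟩ := Ideal.Quotient.exists_inv (I := P)
      (by rw [Ne, Ideal.Quotient.eq_zero_iff_mem]; exact hdetTP)
    exact IsUnit.of_mul_eq_one _ hb
  have hST' : (φ S) ^ s = φ T := by rw [← map_pow, hS]
  have hdetS' : IsUnit (φ S).det := by
    have : IsUnit ((φ S).det ^ s) := by
      rw [← Matrix.det_pow, hST']; exact hdetT'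
    exact (isUnit_pow_iff hs0.ne').mp this
  have hSunit : IsUnit (φ S) := (Matrix.isUnit_iff_isUnit_det _).mpr hdetS'
  obtain ⟨u, hu⟩ := hSunit
  have hT1 : φ T = 1 := by
    calc φ T = (φ S) ^ s := hST'.symm
      _ = ((u : Matrix (Fin n) (Fin n) ((𝓞 K) ⧸ P)) ^ s) := by rw [hu]
      _ = (((u ^ M) ^ (B + 1) : (Matrix (Fin n) (Fin n) ((𝓞 K) ⧸ P))ˣ) :
            Matrix (Fin n) (Fin n) ((𝓞 K) ⧸ P)) := by
          rw [← pow_mul, ← hsdef, Units.val_pow_eq_pow_val]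
      _ = 1 := by rw [hMdef, pow_card_eq_one', one_pow, Units.val_one]
  -- conclude x ∈ P
  have hxP : x ∈ P := by
    rw [← Ideal.Quotient.eq_zero_iff_mem, hxdef, map_sub]
    have hTij : Ideal.Quotient.mk P (T i j) = (φ T) i j := by
      rw [hφdef, RingHom.mapMatrix_apply, Matrix.map_apply]
    have h1ij : Ideal.Quotient.mk P ((1 : Matrix (Fin n) (Fin n) (𝓞 K)) i j)
        = (φ (1 : Matrix (Fin n) (Fin n) (𝓞 K))) i j := by
      rw [hφdef, RingHom.mapMatrix_apply, Matrix.map_apply]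
    rw [hTij, h1ij, hT1, map_one, sub_self]
  exact hyP (hydef ▸ Ideal.mul_mem_left _ _ hxP)
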